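/- Let X ∈ C^α([0,T];V) and let f : V×V → V have continuous mixed partial Fréchet derivatives D₂^k D₁^j f for 0 ≤ j ≤ 3, 0 ≤ k ≤ 1, with ‖f‖_{K,3,β₁} := Σ_{j=0}^3 Σ_{k=0}^1 sup_{x∈K,y∈V} ‖D₂^kD₁^j f(x,y)‖/(1+‖y‖_V)^{β_k} < ∞ for K the closed convex hull of {X_t : t∈[0,T]}. Set W(t,x) := f(X_t,x), and let (Y,Ẏ) ∈ 𝓔_W^{2α} be a nonlinear controlled rough path of W. Define Y'_t := D₁f(X_t, Ẏ_t) ∈ L(V;V). Then (Y,Y') is a (linear) controlled rough path of X: Y' is α-Hölder as a map [0,T] → L(V;V), and the remainder R̃^Y_{s,t} := Y_t − Y_s − Y'_s(X_t − X_s) has finite 2α-Hölder seminorm; explicitly, ‖R̃^Y‖_{2α} ≤ (1/2)‖f‖_{K,3,β₁}(1+‖Ẏ‖_∞)^{β₀}‖X‖_α² + ‖R^Y‖_{2α}. -/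

import Mathlib

open Set

section Aux

variable {V : Type*} [NormedAddCommGroup V] [NormedSpace ℝ V]
  {W : Type*} [NormedAddCommGroup W] [NormedSpace ℝ W]

lemma aux_norm_fderiv_le_iter1 (g : V → W) (u : V) :
    ‖fderiv ℝ g u‖ ≤ ‖iteratedFDeriv ℝ 1 g u‖ := by
  refine ContinuousLinearMap.opNorm_le_bound _ (norm_nonneg _) fun h => ?_
  have : fderiv ℝ g u h = iteratedFDeriv ℝ 1 g u (fun _ => h) := by simp
  rw [this]
  calc ‖iteratedFDeriv ℝ 1 g u (fun _ => h)‖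
      ≤ ‖iteratedFDeriv ℝ 1 g u‖ * ∏ i : Fin 1, ‖(fun _ => h) i‖ :=
        ContinuousMultilinearMap.le_opNorm _ _
    _ = ‖iteratedFDeriv ℝ 1 g u‖ * ‖h‖ := by simp

lemma aux_norm_fderiv2_le_iter2 (g : V → W) (u : V) :
    ‖fderiv ℝ (fderiv ℝ g) u‖ ≤ ‖iteratedFDeriv ℝ 2 g u‖ := by
  refine ContinuousLinearMap.opNorm_le_bound _ (norm_nonneg _) fun h => ?_
  refine ContinuousLinearMap.opNorm_le_bound _ (mul_nonneg (norm_nonneg _) (norm_nonneg _))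
    fun k => ?_
  have : fderiv ℝ (fderiv ℝ g) u h k = iteratedFDeriv ℝ 2 g u ![h, k] := by
    rw [iteratedFDeriv_two_apply]; simp
  rw [this]
  calc ‖iteratedFDeriv ℝ 2 g u ![h, k]‖
      ≤ ‖iteratedFDeriv ℝ 2 g u‖ * ∏ i : Fin 2, ‖(![h, k]) i‖ :=
        ContinuousMultilinearMap.le_opNorm _ _
    _ = ‖iteratedFDeriv ℝ 2 g u‖ * ‖h‖ * ‖k‖ := by
        simp [Fin.prod_univ_two, mul_assoc]

/-- Second-order Taylor bound on a convex set. -/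
lemma aux_taylor_two {f : V → V} {s : Set V}
    (hs : Convex ℝ s) (hf : ContDiff ℝ 2 f) {C : ℝ}
    (hC : ∀ u ∈ s, ‖fderiv ℝ (fderiv ℝ f) u‖ ≤ C) {x y : V} (hx : x ∈ s) (hy : y ∈ s) :
    ‖f y - f x - fderiv ℝ f x (y - x)‖ ≤ C / 2 * ‖y - x‖ ^ 2 := by
  have hdf : Differentiable ℝ (fderiv ℝ f) := (hf.fderiv_right (m := 1) (by norm_num)).differentiable (by norm_num)
  have hfd : Differentiable ℝ f := hf.differentiable (by norm_num)
  set v := y - x with hv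
  set c := fderiv ℝ f x v with hc
  set φ : ℝ → V := fun θ => f (x + θ • v) - f x - θ • c with hφ
  have hd : ∀ θ : ℝ, HasDerivAt φ (fderiv ℝ f (x + θ • v) v - c) θ := by
    intro θ
    have h1 : HasDerivAt (fun θ : ℝ => x + θ • v) v θ := by
      simpa using ((hasDerivAt_id θ).smul_const v).const_add x
    have h2 : HasDerivAt (fun θ : ℝ => f (x + θ • v)) (fderiv ℝ f (x + θ • v) v) θ :=
      (hfd (x + θ • v)).hasFDerivAt.comp_hasDerivAt θ h1
    have h3 : HasDerivAt (fun θ : ℝ => θ • c) c θ := by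
      simpa using (hasDerivAt_id θ).smul_const c
    exact (h2.sub_const (f x)).sub h3
  have hC0 : 0 ≤ C := le_trans (norm_nonneg _) (hC x hx)
  have bound : ∀ θ ∈ Ico (0:ℝ) 1, ‖fderiv ℝ f (x + θ • v) v - c‖ ≤ C * ‖v‖ ^ 2 * θ := by
    intro θ hθ
    have hmem : x + θ • v ∈ s := hs.add_smul_sub_mem hx hy ⟨hθ.1, hθ.2.le⟩
    have hmvt : ‖fderiv ℝ f (x + θ • v) - fderiv ℝ f x‖ ≤ C * ‖(x + θ • v) - x‖ :=
      hs.norm_image_sub_le_of_norm_fderiv_le (fun u _ => hdf u) hC hx hmem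
    have h4 : ‖fderiv ℝ f (x + θ • v) v - c‖ ≤ ‖fderiv ℝ f (x + θ • v) - fderiv ℝ f x‖ * ‖v‖ := by
      rw [hc]
      calc ‖fderiv ℝ f (x + θ • v) v - fderiv ℝ f x v‖
          = ‖(fderiv ℝ f (x + θ • v) - fderiv ℝ f x) v‖ := by simp
        _ ≤ _ := ContinuousLinearMap.le_opNorm _ _
    have h5 : ‖(x + θ • v) - x‖ = θ * ‖v‖ := by
      simp [norm_smul, abs_of_nonneg hθ.1]
    calc ‖fderiv ℝ f (x + θ • v) v - c‖ ≤ (C * (θ * ‖v‖)) * ‖v‖ := by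
          refine h4.trans ?_
          exact mul_le_mul_of_nonneg_right (by rw [← h5]; exact hmvt) (norm_nonneg _)
      _ = C * ‖v‖ ^ 2 * θ := by ring
  have hB : ∀ θ : ℝ, HasDerivAt (fun θ : ℝ => C * ‖v‖ ^ 2 / 2 * θ ^ 2) (C * ‖v‖ ^ 2 * θ) θ := by
    intro θ
    have := (hasDerivAt_pow 2 θ).const_mul (C * ‖v‖ ^ 2 / 2)
    refine this.congr_deriv ?_
    rw [show (2:ℕ) - 1 = 1 from rfl]
    ring
  have key : ∀ ⦃θ⦄, θ ∈ Icc (0:ℝ) 1 → ‖φ θ‖ ≤ C * ‖v‖ ^ 2 / 2 * θ ^ 2 := by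
    refine image_norm_le_of_norm_deriv_right_le_deriv_boundary
      (fun θ _ => (hd θ).continuousAt.continuousWithinAt)
      (fun θ _ => (hd θ).hasDerivWithinAt) ?_ hB bound
    simp [hφ]
  have h1 := key (right_mem_Icc.2 zero_le_one)
  have hφ1 : φ 1 = f y - f x - fderiv ℝ f x (y - x) := by
    simp [hφ, hv, hc, map_sub]
  rw [hφ1] at h1
  calc ‖f y - f x - fderiv ℝ f x (y - x)‖ ≤ C * ‖y - x‖ ^ 2 / 2 * 1 ^ 2 := h1
    _ = C / 2 * ‖y - x‖ ^ 2 := by ring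

/-- Differentiability of the partial derivative in the second variable, with the
mixed-partial symmetry identification. -/
lemma aux_mixed {F : V → V → V}
    (hsm : ContDiff ℝ 4 (fun p : V × V => F p.1 p.2)) (u y : V) :
    ∃ D : V →L[ℝ] (V →L[ℝ] V), HasFDerivAt (fun y' => fderiv ℝ (fun u' => F u' y') u) D y ∧
      ∀ k h : V, D k h = fderiv ℝ (fun u' : V => fderiv ℝ (fun x => F u' x) y) u h k := by
  set G : V × V → V := fun p => F p.1 p.2 with hGdef
  have hG : Differentiable ℝ G := hsm.differentiable (by norm_num)
  set DG := fderiv ℝ G with hDGdef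
  have hDG : ContDiff ℝ 3 DG := hsm.fderiv_right (by norm_num)
  have hDGd : Differentiable ℝ DG := hDG.differentiable (by norm_num)
  set J₁ : V →L[ℝ] V × V := (ContinuousLinearMap.id ℝ V).prod 0 with hJ₁
  set J₂ : V →L[ℝ] V × V := (0 : V →L[ℝ] V).prod (ContinuousLinearMap.id ℝ V) with hJ₂
  set D2 := fderiv ℝ DG (u, y) with hD2
  have hsymm : ∀ v w, D2 v w = D2 w v :=
    second_derivative_symmetric (fun p => (hG p).hasFDerivAt) ((hDGd (u, y)).hasFDerivAt)
  have haux1 : ∀ (u₀ y₀ : V), HasFDerivAt (fun u' => F u' y₀) ((DG (u₀, y₀)).comp J₁) u₀ := by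
    intro u₀ y₀
    have h1 : HasFDerivAt (fun u' : V => (u', y₀)) J₁ u₀ :=
      HasFDerivAt.prodMk (hasFDerivAt_id u₀) (hasFDerivAt_const y₀ u₀)
    exact (hG (u₀, y₀)).hasFDerivAt.comp u₀ h1
  have haux2 : ∀ (u₀ y₀ : V), HasFDerivAt (fun x => F u₀ x) ((DG (u₀, y₀)).comp J₂) y₀ := by
    intro u₀ y₀
    have h1 : HasFDerivAt (fun x : V => (u₀, x)) J₂ y₀ :=
      HasFDerivAt.prodMk (hasFDerivAt_const u₀ y₀) (hasFDerivAt_id y₀)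
    exact (hG (u₀, y₀)).hasFDerivAt.comp y₀ h1
  set Λ₁ : ((V × V) →L[ℝ] V) →L[ℝ] (V →L[ℝ] V) :=
    (ContinuousLinearMap.compL ℝ V (V × V) V).flip J₁ with hΛ₁
  set Λ₂ : ((V × V) →L[ℝ] V) →L[ℝ] (V →L[ℝ] V) :=
    (ContinuousLinearMap.compL ℝ V (V × V) V).flip J₂ with hΛ₂
  have heq : (fun y' => fderiv ℝ (fun u' => F u' y') u) = fun y' => Λ₁ (DG (u, y')) := by
    funext y'
    rw [(haux1 u y').fderiv]; rfl
  have hline : HasFDerivAt (fun y' : V => (u, y')) J₂ y :=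
    HasFDerivAt.prodMk (hasFDerivAt_const u y) (hasFDerivAt_id y)
  have hDGy : HasFDerivAt (fun y' : V => DG (u, y')) (D2.comp J₂) y :=
    (hDGd (u, y)).hasFDerivAt.comp y hline
  have hΦ : HasFDerivAt (fun y' => Λ₁ (DG (u, y'))) (Λ₁.comp (D2.comp J₂)) y :=
    Λ₁.hasFDerivAt.comp y hDGy
  refine ⟨Λ₁.comp (D2.comp J₂), heq ▸ hΦ, fun k h => ?_⟩
  have hΨ : HasFDerivAt (fun u' : V => fderiv ℝ (fun x => F u' x) y) (Λ₂.comp (D2.comp J₁)) u := by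
    have heq2 : (fun u' : V => fderiv ℝ (fun x => F u' x) y) = fun u' => Λ₂ (DG (u', y)) := by
      funext u'
      rw [(haux2 u' y).fderiv]; rfl
    rw [heq2]
    exact Λ₂.hasFDerivAt.comp u ((hDGd (u, y)).hasFDerivAt.comp u
      (HasFDerivAt.prodMk (hasFDerivAt_id u) (hasFDerivAt_const y u)))
  rw [hΨ.fderiv]
  show (D2 (J₂ k)) (J₁ h) = (D2 (J₁ h)) (J₂ k)
  exact hsymm _ _

end Aux

/-- Lemma 5.1: if `W(t,x) = f(X_t,x)` with `f ∈ C^{3,β₁}_{loc}` and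
`(Y, Ẏ) ∈ 𝓔_W^{2α}` is a nonlinear controlled rough path of `W`, then with
`Y'_t = D₁ f(X_t, Ẏ_t) ∈ L(V;V)`, the pair `(Y, Y')` is a linear controlled rough path
of `X`: `Y'` is α-Hölder and the remainder `R̃^Y_{s,t} = Y_t - Y_s - Y'_s(X_t - X_s)`
satisfies `‖R̃^Y‖_{2α} ≤ (1/2)‖f‖_{K,3,β₁}(1+‖Ẏ‖_∞)^{β₀}‖X‖_α² + ‖R^Y‖_{2α}`. -/
theorem stmt_15 {V : Type*} [NormedAddCommGroup V] [NormedSpace ℝ V]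
    (T α β₀ β₁ : ℝ) (hT : 0 < T) (hα1 : 1 / 3 < α) (hα2 : α ≤ 1 / 2)
    (hβ₀ : 0 ≤ β₀) (hβ₁ : 0 ≤ β₁)
    (X : ℝ → V) (CX : ℝ) (hCX : 0 ≤ CX)
    (hX : ∀ s ∈ Icc (0 : ℝ) T, ∀ t ∈ Icc (0 : ℝ) T, ‖X t - X s‖ ≤ CX * |t - s| ^ α)
    (F : V → V → V)
    (hsm : ContDiff ℝ 4 (fun p : V × V => F p.1 p.2))
    (Nf : ℝ)
    (hf0 : ∀ j ≤ 3, ∀ u ∈ closure (convexHull ℝ (X '' Icc (0 : ℝ) T)), ∀ x : V,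
      ‖iteratedFDeriv ℝ j (fun u' : V => F u' x) u‖ ≤ Nf * (1 + ‖x‖) ^ β₀)
    (hf1 : ∀ j ≤ 3, ∀ u ∈ closure (convexHull ℝ (X '' Icc (0 : ℝ) T)), ∀ x : V,
      ‖iteratedFDeriv ℝ j (fun u' : V => fderiv ℝ (fun y => F u' y) x) u‖
        ≤ Nf * (1 + ‖x‖) ^ β₁)
    (Y Yd : ℝ → V) (MYd CY CYd CR : ℝ)
    (hMYd : ∀ t ∈ Icc (0 : ℝ) T, ‖Yd t‖ ≤ MYd)
    (hCY : ∀ s ∈ Icc (0 : ℝ) T, ∀ t ∈ Icc (0 : ℝ) T, ‖Y t - Y s‖ ≤ CY * |t - s| ^ α)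
    (hCYd : ∀ s ∈ Icc (0 : ℝ) T, ∀ t ∈ Icc (0 : ℝ) T, ‖Yd t - Yd s‖ ≤ CYd * |t - s| ^ α)
    (hCR : ∀ s ∈ Icc (0 : ℝ) T, ∀ t ∈ Icc (0 : ℝ) T,
      ‖Y t - Y s - (F (X t) (Yd s) - F (X s) (Yd s))‖ ≤ CR * |t - s| ^ (2 * α)) :
    (∃ C : ℝ, ∀ s ∈ Icc (0 : ℝ) T, ∀ t ∈ Icc (0 : ℝ) T,
      ‖fderiv ℝ (fun u : V => F u (Yd t)) (X t) - fderiv ℝ (fun u : V => F u (Yd s)) (X s)‖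
        ≤ C * |t - s| ^ α) ∧
    (∀ s ∈ Icc (0 : ℝ) T, ∀ t ∈ Icc (0 : ℝ) T,
      ‖Y t - Y s - fderiv ℝ (fun u : V => F u (Yd s)) (X s) (X t - X s)‖
        ≤ ((1 / 2) * Nf * (1 + MYd) ^ β₀ * CX ^ 2 + CR) * |t - s| ^ (2 * α)) := by
  set K := closure (convexHull ℝ (X '' Icc (0 : ℝ) T)) with hK
  have hKconv : Convex ℝ K := (convex_convexHull ℝ _).closure
  have hXK : ∀ t ∈ Icc (0 : ℝ) T, X t ∈ K :=
    fun t ht => subset_closure (subset_convexHull ℝ _ ⟨t, ht, rfl⟩)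
  have h0T : (0 : ℝ) ∈ Icc (0 : ℝ) T := ⟨le_refl _, hT.le⟩
  have hNf : 0 ≤ Nf := by
    have h := hf0 0 (by norm_num) (X 0) (hXK 0 h0T) 0
    have h2 : (0:ℝ) ≤ Nf * (1 + ‖(0:V)‖) ^ β₀ := le_trans (norm_nonneg _) h
    simpa using h2
  have hMYd0 : 0 ≤ MYd := le_trans (norm_nonneg _) (hMYd 0 h0T)
  have hmono0 : ∀ y : V, ‖y‖ ≤ MYd → (1 + ‖y‖) ^ β₀ ≤ (1 + MYd) ^ β₀ :=
    fun y hy => Real.rpow_le_rpow (by positivity) (by linarith) hβ₀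
  have hmono1 : ∀ y : V, ‖y‖ ≤ MYd → (1 + ‖y‖) ^ β₁ ≤ (1 + MYd) ^ β₁ :=
    fun y hy => Real.rpow_le_rpow (by positivity) (by linarith) hβ₁
  have hpow0 : (0:ℝ) ≤ (1 + MYd) ^ β₀ := Real.rpow_nonneg (by linarith) _
  have hpow1 : (0:ℝ) ≤ (1 + MYd) ^ β₁ := Real.rpow_nonneg (by linarith) _
  -- smoothness of partial functions
  have hgC : ∀ y : V, ContDiff ℝ 4 (fun u : V => F u y) := by
    intro y
    have h1 : ContDiff ℝ 4 (fun u : V => (u, y)) := contDiff_id.prodMk contDiff_const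
    have := hsm.comp h1
    simpa [Function.comp_def] using this
  have hgfd : ∀ y : V, Differentiable ℝ (fderiv ℝ (fun u : V => F u y)) := by
    intro y
    have h2 : ContDiff ℝ 1 (fderiv ℝ (fun u : V => F u y)) := (hgC y).fderiv_right (by norm_num)
    exact h2.differentiable (by norm_num)
  -- bound on the second derivative in the first variable
  have hD2bound : ∀ y : V, ‖y‖ ≤ MYd → ∀ u ∈ K,
      ‖fderiv ℝ (fderiv ℝ (fun u' : V => F u' y)) u‖ ≤ Nf * (1 + MYd) ^ β₀ := by
    intro y hy u hu
    calc ‖fderiv ℝ (fderiv ℝ (fun u' : V => F u' y)) u‖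
        ≤ ‖iteratedFDeriv ℝ 2 (fun u' : V => F u' y) u‖ := aux_norm_fderiv2_le_iter2 _ _
      _ ≤ Nf * (1 + ‖y‖) ^ β₀ := hf0 2 (by norm_num) u hu y
      _ ≤ Nf * (1 + MYd) ^ β₀ := mul_le_mul_of_nonneg_left (hmono0 y hy) hNf
  constructor
  · -- α-Hölder continuity of Y'
    refine ⟨Nf * (1 + MYd) ^ β₀ * CX + Nf * (1 + MYd) ^ β₁ * CYd, fun s hs t ht => ?_⟩
    have hXb := hX s hs t ht
    have hYdb := hCYd s hs t ht
    have hpα : (0:ℝ) ≤ |t - s| ^ α := Real.rpow_nonneg (abs_nonneg _) _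
    -- Term 1 : variation in the first variable
    have hterm1 : ‖fderiv ℝ (fun u : V => F u (Yd t)) (X t) -
        fderiv ℝ (fun u : V => F u (Yd t)) (X s)‖ ≤ Nf * (1 + MYd) ^ β₀ * (CX * |t - s| ^ α) := by
      have hmvt := hKconv.norm_image_sub_le_of_norm_fderiv_le
        (f := fderiv ℝ (fun u : V => F u (Yd t)))
        (fun u _ => (hgfd (Yd t)) u) (hD2bound (Yd t) (hMYd t ht)) (hXK s hs) (hXK t ht)
      refine hmvt.trans ?_
      exact mul_le_mul_of_nonneg_left hXb (mul_nonneg hNf hpow0)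
    -- Term 2 : variation in the second variable
    have hterm2 : ‖fderiv ℝ (fun u : V => F u (Yd t)) (X s) -
        fderiv ℝ (fun u : V => F u (Yd s)) (X s)‖
        ≤ Nf * (1 + MYd) ^ β₁ * (CYd * |t - s| ^ α) := by
      have hball : Convex ℝ (Metric.closedBall (0 : V) MYd) := convex_closedBall _ _
      have hdiff : ∀ y' ∈ Metric.closedBall (0 : V) MYd,
          DifferentiableAt ℝ (fun y'' => fderiv ℝ (fun u : V => F u y'') (X s)) y' := by
        intro y' _
        obtain ⟨D, hD, -⟩ := aux_mixed hsm (X s) y'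
        exact hD.differentiableAt
      have hbd : ∀ y' ∈ Metric.closedBall (0 : V) MYd,
          ‖fderiv ℝ (fun y'' => fderiv ℝ (fun u : V => F u y'') (X s)) y'‖
            ≤ Nf * (1 + MYd) ^ β₁ := by
        intro y' hy'
        have hy'n : ‖y'‖ ≤ MYd := by simpa using mem_closedBall_zero_iff.1 hy'
        obtain ⟨D, hD, hDkh⟩ := aux_mixed hsm (X s) y'
        rw [hD.fderiv]
        refine ContinuousLinearMap.opNorm_le_bound _ (mul_nonneg hNf hpow1) fun k => ?_
        refine ContinuousLinearMap.opNorm_le_bound _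
          (mul_nonneg (mul_nonneg hNf hpow1) (norm_nonneg _)) fun h => ?_
        rw [hDkh k h]
        have h1 : ‖fderiv ℝ (fun u' : V => fderiv ℝ (fun x => F u' x) y') (X s) h k‖
            ≤ ‖fderiv ℝ (fun u' : V => fderiv ℝ (fun x => F u' x) y') (X s)‖ * ‖h‖ * ‖k‖ := by
          calc ‖fderiv ℝ (fun u' : V => fderiv ℝ (fun x => F u' x) y') (X s) h k‖
              ≤ ‖fderiv ℝ (fun u' : V => fderiv ℝ (fun x => F u' x) y') (X s) h‖ * ‖k‖ :=
                ContinuousLinearMap.le_opNorm _ _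
            _ ≤ ‖fderiv ℝ (fun u' : V => fderiv ℝ (fun x => F u' x) y') (X s)‖ * ‖h‖ * ‖k‖ :=
                mul_le_mul_of_nonneg_right (ContinuousLinearMap.le_opNorm _ _) (norm_nonneg _)
        refine h1.trans ?_
        have h2 : ‖fderiv ℝ (fun u' : V => fderiv ℝ (fun x => F u' x) y') (X s)‖
            ≤ Nf * (1 + MYd) ^ β₁ := by
          calc ‖fderiv ℝ (fun u' : V => fderiv ℝ (fun x => F u' x) y') (X s)‖
              ≤ ‖iteratedFDeriv ℝ 1 (fun u' : V => fderiv ℝ (fun x => F u' x) y') (X s)‖ :=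
                aux_norm_fderiv_le_iter1 _ _
            _ ≤ Nf * (1 + ‖y'‖) ^ β₁ := hf1 1 (by norm_num) (X s) (hXK s hs) y'
            _ ≤ Nf * (1 + MYd) ^ β₁ := mul_le_mul_of_nonneg_left (hmono1 y' hy'n) hNf
        calc ‖fderiv ℝ (fun u' : V => fderiv ℝ (fun x => F u' x) y') (X s)‖ * ‖h‖ * ‖k‖
            ≤ Nf * (1 + MYd) ^ β₁ * ‖h‖ * ‖k‖ := by
              gcongr
          _ = Nf * (1 + MYd) ^ β₁ * ‖k‖ * ‖h‖ := by ring
      have hys : Yd s ∈ Metric.closedBall (0 : V) MYd := by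
        simpa [mem_closedBall_zero_iff] using hMYd s hs
      have hyt : Yd t ∈ Metric.closedBall (0 : V) MYd := by
        simpa [mem_closedBall_zero_iff] using hMYd t ht
      have hmvt := hball.norm_image_sub_le_of_norm_fderiv_le
        (f := fun y'' => fderiv ℝ (fun u : V => F u y'') (X s)) hdiff hbd hys hyt
      refine hmvt.trans ?_
      exact mul_le_mul_of_nonneg_left hYdb (mul_nonneg hNf hpow1)
    calc ‖fderiv ℝ (fun u : V => F u (Yd t)) (X t) - fderiv ℝ (fun u : V => F u (Yd s)) (X s)‖
        = ‖(fderiv ℝ (fun u : V => F u (Yd t)) (X t) - fderiv ℝ (fun u : V => F u (Yd t)) (X s)) +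
            (fderiv ℝ (fun u : V => F u (Yd t)) (X s) -
              fderiv ℝ (fun u : V => F u (Yd s)) (X s))‖ := by
          congr 1; abel
      _ ≤ ‖fderiv ℝ (fun u : V => F u (Yd t)) (X t) -
            fderiv ℝ (fun u : V => F u (Yd t)) (X s)‖ +
          ‖fderiv ℝ (fun u : V => F u (Yd t)) (X s) -
            fderiv ℝ (fun u : V => F u (Yd s)) (X s)‖ := norm_add_le _ _
      _ ≤ Nf * (1 + MYd) ^ β₀ * (CX * |t - s| ^ α) +
          Nf * (1 + MYd) ^ β₁ * (CYd * |t - s| ^ α) := add_le_add hterm1 hterm2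
      _ = (Nf * (1 + MYd) ^ β₀ * CX + Nf * (1 + MYd) ^ β₁ * CYd) * |t - s| ^ α := by ring
  · -- the remainder estimate
    intro s hs t ht
    have htay := aux_taylor_two (f := fun u : V => F u (Yd s)) hKconv
      ((hgC (Yd s)).of_le (by norm_num))
      (hD2bound (Yd s) (hMYd s hs)) (hXK s hs) (hXK t ht)
    have hXb := hX s hs t ht
    have hpα : (0:ℝ) ≤ |t - s| ^ α := Real.rpow_nonneg (abs_nonneg _) _
    have hXsq : ‖X t - X s‖ ^ 2 ≤ CX ^ 2 * |t - s| ^ (2 * α) := by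
      have h1 : ‖X t - X s‖ ^ 2 ≤ (CX * |t - s| ^ α) ^ 2 := by
        have := pow_le_pow_left₀ (norm_nonneg (X t - X s)) hXb 2
        exact this
      refine h1.trans_eq ?_
      have h2 : (|t - s| ^ α) ^ (2:ℕ) = |t - s| ^ (2 * α) := by
        rw [← Real.rpow_natCast (|t - s| ^ α) 2, ← Real.rpow_mul (abs_nonneg _)]
        norm_num [mul_comm]
      rw [mul_pow, h2]
    have hRb := hCR s hs t ht
    have hkey : ‖Y t - Y s - fderiv ℝ (fun u : V => F u (Yd s)) (X s) (X t - X s)‖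
        ≤ CR * |t - s| ^ (2 * α) +
          Nf * (1 + MYd) ^ β₀ / 2 * (CX ^ 2 * |t - s| ^ (2 * α)) := by
      calc ‖Y t - Y s - fderiv ℝ (fun u : V => F u (Yd s)) (X s) (X t - X s)‖
          = ‖(Y t - Y s - (F (X t) (Yd s) - F (X s) (Yd s))) +
              (F (X t) (Yd s) - F (X s) (Yd s) -
                fderiv ℝ (fun u : V => F u (Yd s)) (X s) (X t - X s))‖ := by
            congr 1; abel
        _ ≤ ‖Y t - Y s - (F (X t) (Yd s) - F (X s) (Yd s))‖ +
            ‖F (X t) (Yd s) - F (X s) (Yd s) -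
              fderiv ℝ (fun u : V => F u (Yd s)) (X s) (X t - X s)‖ := norm_add_le _ _
        _ ≤ CR * |t - s| ^ (2 * α) + Nf * (1 + MYd) ^ β₀ / 2 * ‖X t - X s‖ ^ 2 :=
            add_le_add hRb htay
        _ ≤ CR * |t - s| ^ (2 * α) + Nf * (1 + MYd) ^ β₀ / 2 * (CX ^ 2 * |t - s| ^ (2 * α)) := by
            have := mul_le_mul_of_nonneg_left hXsq
              (div_nonneg (mul_nonneg hNf hpow0) (by norm_num : (0:ℝ) ≤ 2))
            linarith
    refine hkey.trans_eq ?_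
    ring
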